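/- Let μ be a probability measure on a measurable space α, let κ and η be Markov kernels from α to a measurable space β such that the map x ↦ TV(κ(x), η(x)) is measurable, and let ρ be a Markov kernel from α × β to a measurable space γ. Then TV((μ ⊗ κ) ⊗ ρ, (μ ⊗ η) ⊗ ρ) ≤ ∫ TV(κ(x), η(x)) dμ(x). In particular, replacing one conditional in a sequential factorization changes the joint distribution by at most the expected total variation distance of that conditional, regardless of the subsequent common kernel. -/

import Mathlib

open MeasureTheory ProbabilityTheory

/-- Total variation distance between two measures:
`TV(P,Q) = sup { |P(A) - Q(A)| : A measurable }`. -/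
noncomputable def tvDist {α : Type*} [MeasurableSpace α] (P Q : Measure α) : ℝ :=
  ⨆ A : {s : Set α // MeasurableSet s}, |(P A.1).toReal - (Q A.1).toReal|

lemma abs_le_tvDist {β : Type*} [MeasurableSpace β] (P Q : Measure β)
    [IsFiniteMeasure P] [IsFiniteMeasure Q] {A : Set β} (hA : MeasurableSet A) :
    |(P A).toReal - (Q A).toReal| ≤ tvDist P Q := by
  refine le_ciSup (f := fun A : {s : Set β // MeasurableSet s} =>
    |(P A.1).toReal - (Q A.1).toReal|) ?_ ⟨A, hA⟩
  refine ⟨(P Set.univ).toReal + (Q Set.univ).toReal, ?_⟩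
  rintro x ⟨⟨s, hs⟩, rfl⟩
  have h1 : (P s).toReal ≤ (P Set.univ).toReal :=
    ENNReal.toReal_mono (measure_ne_top _ _) (measure_mono (Set.subset_univ _))
  have h2 : (Q s).toReal ≤ (Q Set.univ).toReal :=
    ENNReal.toReal_mono (measure_ne_top _ _) (measure_mono (Set.subset_univ _))
  have h3 : 0 ≤ (P s).toReal := ENNReal.toReal_nonneg
  have h4 : 0 ≤ (Q s).toReal := ENNReal.toReal_nonneg
  rw [abs_sub_le_iff]
  constructor <;> linarith

lemma tvDist_nonneg {β : Type*} [MeasurableSpace β] (P Q : Measure β)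
    [IsFiniteMeasure P] [IsFiniteMeasure Q] : 0 ≤ tvDist P Q := by
  have := abs_le_tvDist P Q MeasurableSet.empty
  simpa using this.trans' (abs_nonneg _)

lemma tvDist_le_one {β : Type*} [MeasurableSpace β] (P Q : Measure β)
    [IsProbabilityMeasure P] [IsProbabilityMeasure Q] : tvDist P Q ≤ 1 := by
  refine ciSup_le fun ⟨s, hs⟩ => ?_
  have h1 : (P s).toReal ≤ 1 := by
    simpa using ENNReal.toReal_mono (by simp) (prob_le_one (μ := P) (s := s))
  have h2 : (Q s).toReal ≤ 1 := by
    simpa using ENNReal.toReal_mono (by simp) (prob_le_one (μ := Q) (s := s))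
  have h3 : 0 ≤ (P s).toReal := ENNReal.toReal_nonneg
  have h4 : 0 ≤ (Q s).toReal := ENNReal.toReal_nonneg
  rw [abs_sub_le_iff]
  constructor <;> linarith

/-- For probability measures `P`, `Q` and a measurable `f` with values in `[0,1]`,
`|∫ f dP - ∫ f dQ| ≤ TV(P,Q)`. -/
lemma abs_integral_sub_le_tvDist {β : Type*} [MeasurableSpace β] (P Q : Measure β)
    [IsProbabilityMeasure P] [IsProbabilityMeasure Q] {f : β → ℝ} (hf : Measurable f)
    (h0 : ∀ y, 0 ≤ f y) (h1 : ∀ y, f y ≤ 1) :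
    |∫ y, f y ∂P - ∫ y, f y ∂Q| ≤ tvDist P Q := by
  have hbd : ∀ᵐ y ∂P, ‖f y‖ ≤ (1 : ℝ) := by
    filter_upwards with y; rw [Real.norm_eq_abs, abs_of_nonneg (h0 y)]; exact h1 y
  have hbdQ : ∀ᵐ y ∂Q, ‖f y‖ ≤ (1 : ℝ) := by
    filter_upwards with y; rw [Real.norm_eq_abs, abs_of_nonneg (h0 y)]; exact h1 y
  have hintP : Integrable f P :=
    Integrable.mono' (integrable_const 1) hf.aestronglyMeasurable hbd
  have hintQ : Integrable f Q :=
    Integrable.mono' (integrable_const 1) hf.aestronglyMeasurable hbdQ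
  rw [hintP.integral_eq_integral_Ioc_meas_le (M := 1) (ae_of_all _ h0) (ae_of_all _ h1),
    hintQ.integral_eq_integral_Ioc_meas_le (M := 1) (ae_of_all _ h0) (ae_of_all _ h1)]
  have hfin : IsFiniteMeasure ((volume : Measure ℝ).restrict (Set.Ioc 0 1)) :=
    ⟨by rw [Measure.restrict_apply_univ]; exact measure_Ioc_lt_top⟩
  have hantP : Antitone fun t : ℝ => P {a | t ≤ f a} :=
    fun _ _ hst => measure_mono fun _ h => hst.trans h
  have hantQ : Antitone fun t : ℝ => Q {a | t ≤ f a} :=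
    fun _ _ hst => measure_mono fun _ h => hst.trans h
  have hmP : Measurable fun t : ℝ => (P {a | t ≤ f a}).toReal :=
    hantP.measurable.ennreal_toReal
  have hmQ : Measurable fun t : ℝ => (Q {a | t ≤ f a}).toReal :=
    hantQ.measurable.ennreal_toReal
  have hgP : IntegrableOn (fun t : ℝ => (P {a | t ≤ f a}).toReal) (Set.Ioc 0 1) := by
    refine Integrable.mono' (integrable_const (1:ℝ))
      hmP.aestronglyMeasurable ?_
    filter_upwards with t
    rw [Real.norm_eq_abs, abs_of_nonneg ENNReal.toReal_nonneg]
    simpa using ENNReal.toReal_mono (by simp) (prob_le_one (μ := P) (s := {a | t ≤ f a}))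
  have hgQ : IntegrableOn (fun t : ℝ => (Q {a | t ≤ f a}).toReal) (Set.Ioc 0 1) := by
    refine Integrable.mono' (integrable_const (1:ℝ))
      hmQ.aestronglyMeasurable ?_
    filter_upwards with t
    rw [Real.norm_eq_abs, abs_of_nonneg ENNReal.toReal_nonneg]
    simpa using ENNReal.toReal_mono (by simp) (prob_le_one (μ := Q) (s := {a | t ≤ f a}))
  simp only [measureReal_def]
  rw [← integral_sub hgP hgQ]
  calc |∫ t in Set.Ioc (0:ℝ) 1, ((P {a | t ≤ f a}).toReal - (Q {a | t ≤ f a}).toReal)|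
      ≤ ∫ t in Set.Ioc (0:ℝ) 1, |(P {a | t ≤ f a}).toReal - (Q {a | t ≤ f a}).toReal| := by
        simpa [Real.norm_eq_abs] using norm_integral_le_integral_norm
          fun t : ℝ => (P {a | t ≤ f a}).toReal - (Q {a | t ≤ f a}).toReal
    _ ≤ ∫ _t in Set.Ioc (0:ℝ) 1, tvDist P Q := by
        refine integral_mono (hgP.sub hgQ).abs (integrable_const (tvDist P Q)) fun t => ?_
        exact abs_le_tvDist P Q (measurableSet_le measurable_const hf)
    _ = tvDist P Q := by simp

/-- For a probability measure `μ` on `α`, Markov kernels `κ, η` from `α`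
to `β` (with `x ↦ TV(κ x, η x)` measurable) and a Markov kernel `ρ` from `α × β` to `γ`,
`TV((μ ⊗ κ) ⊗ ρ, (μ ⊗ η) ⊗ ρ) ≤ ∫ TV(κ x, η x) dμ(x)`. -/
theorem tvDist_compProd_compProd_le_integral {α β γ : Type*}
    [MeasurableSpace α] [MeasurableSpace β] [MeasurableSpace γ]
    (μ : Measure α) [IsProbabilityMeasure μ]
    (κ η : Kernel α β) [IsMarkovKernel κ] [IsMarkovKernel η]
    (hmeas : Measurable fun x => tvDist (κ x) (η x))
    (ρ : Kernel (α × β) γ) [IsMarkovKernel ρ] :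
    tvDist ((μ ⊗ₘ κ) ⊗ₘ ρ) ((μ ⊗ₘ η) ⊗ₘ ρ) ≤ ∫ x, tvDist (κ x) (η x) ∂μ := by
  refine ciSup_le fun ⟨A, hA⟩ => ?_
  set f : α × β → ℝ := fun p => (ρ p (Prod.mk p ⁻¹' A)).toReal with hf_def
  have hfm : Measurable f := (Kernel.measurable_kernel_prodMk_left hA).ennreal_toReal
  have h0 : ∀ p, 0 ≤ f p := fun p => ENNReal.toReal_nonneg
  have h1 : ∀ p, f p ≤ 1 := fun p => by
    simpa using ENNReal.toReal_mono (by simp) (prob_le_one (μ := ρ p) (s := Prod.mk p ⁻¹' A))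
  have hbd : ∀ {ν : Measure (α × β)}, ∀ᵐ p ∂ν, ‖f p‖ ≤ (1 : ℝ) := by
    intro ν
    filter_upwards with p; rw [Real.norm_eq_abs, abs_of_nonneg (h0 p)]; exact h1 p
  have hint : ∀ (ν : Measure (α × β)) [IsProbabilityMeasure ν], Integrable f ν := by
    intro ν _
    exact Integrable.mono' (integrable_const 1) hfm.aestronglyMeasurable hbd
  have key : ∀ (ξ : Kernel α β) [IsMarkovKernel ξ],
      (((μ ⊗ₘ ξ) ⊗ₘ ρ) A).toReal = ∫ x, ∫ y, f (x, y) ∂(ξ x) ∂μ := by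
    intro ξ _
    rw [Measure.compProd_apply hA,
      ← integral_toReal (Kernel.measurable_kernel_prodMk_left hA).aemeasurable
        (ae_of_all _ fun p => measure_lt_top _ _),
      Measure.integral_compProd (hint _)]
  rw [key κ, key η]
  have hgm : ∀ (ξ : Kernel α β) [IsMarkovKernel ξ],
      Measurable fun x => ∫ y, f (x, y) ∂(ξ x) := by
    intro ξ _
    exact (StronglyMeasurable.integral_kernel_prod_right'
      (κ := ξ) hfm.stronglyMeasurable).measurable
  have hgbd : ∀ (ξ : Kernel α β) [IsMarkovKernel ξ], ∀ x,
      ‖∫ y, f (x, y) ∂(ξ x)‖ ≤ (1 : ℝ) := by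
    intro ξ _ x
    rw [Real.norm_eq_abs, abs_of_nonneg (integral_nonneg fun y => h0 _)]
    calc ∫ y, f (x, y) ∂(ξ x) ≤ ∫ _y, (1 : ℝ) ∂(ξ x) :=
          integral_mono (Integrable.mono' (integrable_const 1)
            (hfm.comp measurable_prodMk_left).aestronglyMeasurable
            (ae_of_all _ fun y => by
              rw [Real.norm_eq_abs, abs_of_nonneg (h0 _)]; exact h1 _))
            (integrable_const 1) fun y => h1 _
      _ = 1 := by simp
  have hgint : ∀ (ξ : Kernel α β) [IsMarkovKernel ξ],
      Integrable (fun x => ∫ y, f (x, y) ∂(ξ x)) μ := by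
    intro ξ _
    exact Integrable.mono' (integrable_const 1) (hgm ξ).aestronglyMeasurable
      (ae_of_all _ (hgbd ξ))
  have htvint : Integrable (fun x => tvDist (κ x) (η x)) μ := by
    refine Integrable.mono' (integrable_const 1) hmeas.aestronglyMeasurable ?_
    filter_upwards with x
    rw [Real.norm_eq_abs, abs_of_nonneg (tvDist_nonneg _ _)]
    exact tvDist_le_one _ _
  rw [← integral_sub (hgint κ) (hgint η)]
  calc |∫ x, (∫ y, f (x, y) ∂(κ x) - ∫ y, f (x, y) ∂(η x)) ∂μ|
      ≤ ∫ x, |∫ y, f (x, y) ∂(κ x) - ∫ y, f (x, y) ∂(η x)| ∂μ := by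
        simpa [Real.norm_eq_abs] using norm_integral_le_integral_norm
          fun x => ∫ y, f (x, y) ∂(κ x) - ∫ y, f (x, y) ∂(η x)
    _ ≤ ∫ x, tvDist (κ x) (η x) ∂μ := by
        refine integral_mono ((hgint κ).sub (hgint η)).abs htvint fun x => ?_
        exact abs_integral_sub_le_tvDist (κ x) (η x)
          (hfm.comp measurable_prodMk_left) (fun y => h0 _) (fun y => h1 _)
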